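/- arXiv:2109.04818 — 2 statements merged into one kernel-verified Lean document; each statement's English description precedes it below -/
import Mathlib

section
/- Let 𝒫 and ℛ be finite measurable partitions of Ξ and let 𝒫 ∧ ℛ := {P ∩ R : P ∈ 𝒫, R ∈ ℛ} be their common refinement. Then for every x ∈ ℝⁿ one has V_{𝒫∧ℛ}(x) ≥ max(V_𝒫(x), V_ℛ(x)) (as elements of ℝ ∪ {+∞}). -/
open MeasureTheory
open scoped BigOperators Classical

noncomputable section

/-- The space of alea `Ξ = ℝ^{l×n} × ℝ^l`: pairs `ξ = (T, h)`. -/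
abbrev Xi (l n : ℕ) := (Fin l → Fin n → ℝ) × (Fin l → ℝ)

/-- The dual admissible polyhedron `D = {λ : Wᵀλ ≤ q}`. -/
def polyD {l m : ℕ} (W : Fin l → Fin m → ℝ) (q : Fin m → ℝ) : Set (Fin l → ℝ) :=
  {lam | ∀ j, (∑ i, W i j * lam i) ≤ q j}

/-- Recourse cost `Q(x, ξ) = sup_{λ ∈ D} ⟨h - Tx, λ⟩ ∈ ℝ ∪ {+∞}` (as an `EReal`). -/
def Qfun {l n m : ℕ} (W : Fin l → Fin m → ℝ) (q : Fin m → ℝ)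
    (x : Fin n → ℝ) (ξ : Xi l n) : EReal :=
  ⨆ lam ∈ polyD W q, ((∑ i, (ξ.2 i - ∑ j, ξ.1 i j * x j) * lam i : ℝ) : EReal)

/-- A finite measurable partition of `α`, given as a `Finset` of sets. -/
def IsFinPartition {α : Type*} [MeasurableSpace α] (Ps : Finset (Set α)) : Prop :=
  (∀ P ∈ Ps, MeasurableSet P) ∧ ((Ps : Set (Set α)).PairwiseDisjoint id) ∧
    ⋃₀ (Ps : Set (Set α)) = Set.univ

/-- Conditional expectation `E[ξ | ξ ∈ P] = E[ξ 1_{ξ ∈ P}] / ℙ[ξ ∈ P]`. -/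
def condMean {Ω : Type*} [MeasurableSpace Ω] {l n : ℕ} (ℙ : Measure Ω)
    (ξ : Ω → Xi l n) (P : Set (Xi l n)) : Xi l n :=
  (ℙ (ξ ⁻¹' P)).toReal⁻¹ • ∫ ω in ξ ⁻¹' P, ξ ω ∂ℙ

/-- Expected cost-to-go of a partition: `V_Ps(x) = Σ_{P ∈ Ps, ℙ[ξ∈P] > 0} ℙ[ξ∈P] Q(x, E[ξ|P])`. -/
def Vpart {Ω : Type*} [MeasurableSpace Ω] {l n m : ℕ} (W : Fin l → Fin m → ℝ)
    (q : Fin m → ℝ) (ℙ : Measure Ω) (ξ : Ω → Xi l n) (Ps : Finset (Set (Xi l n)))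
    (x : Fin n → ℝ) : EReal :=
  ∑ P ∈ Ps, if 0 < ℙ (ξ ⁻¹' P) then
    ((ℙ (ξ ⁻¹' P)).toReal : EReal) * Qfun W q x (condMean ℙ ξ P) else 0

/-- True expected cost-to-go `V(x) = E[Q(x, ξ)] ∈ ℝ ∪ {+∞}`: the real integral when
`Q(x, ξ)` is integrable (a.e. finite with integrable real part), `+∞` otherwise. -/
def Vtrue {Ω : Type*} [MeasurableSpace Ω] {l n m : ℕ} (W : Fin l → Fin m → ℝ)
    (q : Fin m → ℝ) (ℙ : Measure Ω) (ξ : Ω → Xi l n) (x : Fin n → ℝ) : EReal :=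
  if (∀ᵐ ω ∂ℙ, Qfun W q x (ξ ω) ≠ ⊤) ∧
      Integrable (fun ω => (Qfun W q x (ξ ω)).toReal) ℙ then
    (((∫ ω, (Qfun W q x (ξ ω)).toReal ∂ℙ) : ℝ) : EReal)
  else ⊤

/-- `Ps` ℙ-refines `ℛ`: every `P ∈ Ps` is ℙ-essentially contained in some `R ∈ ℛ`. -/
def PRefines {Ω : Type*} [MeasurableSpace Ω] {l n : ℕ} (ℙ : Measure Ω) (ξ : Ω → Xi l n)
    (Ps ℛ : Finset (Set (Xi l n))) : Prop :=
  ∀ P ∈ Ps, ∃ R ∈ ℛ, ℙ (ξ ⁻¹' (P ∩ R)) = ℙ (ξ ⁻¹' P)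

/-- Conditional expectation `E[Q(x,ξ) | ξ ∈ P] ∈ ℝ ∪ {+∞}`: equal to
`E[Q(x,ξ) 1_{ξ∈P}] / ℙ[ξ∈P]` when `Q(x,ξ) 1_{ξ∈P}` is integrable, `+∞` otherwise. -/
def condQ {Ω : Type*} [MeasurableSpace Ω] {l n m : ℕ} (W : Fin l → Fin m → ℝ)
    (q : Fin m → ℝ) (ℙ : Measure Ω) (ξ : Ω → Xi l n) (x : Fin n → ℝ)
    (P : Set (Xi l n)) : EReal :=
  if (∀ᵐ ω ∂ℙ, ξ ω ∈ P → Qfun W q x (ξ ω) ≠ ⊤) ∧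
      IntegrableOn (fun ω => (Qfun W q x (ξ ω)).toReal) (ξ ⁻¹' P) ℙ then
    (((ℙ (ξ ⁻¹' P)).toReal⁻¹ * ∫ ω in ξ ⁻¹' P, (Qfun W q x (ξ ω)).toReal ∂ℙ : ℝ) : EReal)
  else ⊤

/-- Subdifferential of an `EReal`-valued function at `x`. -/
def SubDiff {n : ℕ} (f : (Fin n → ℝ) → EReal) (x : Fin n → ℝ) : Set (Fin n → ℝ) :=
  {g | ∀ y, f x + ((∑ i, g i * (y i - x i) : ℝ) : EReal) ≤ f y}


private def lf {l n : ℕ} (x : Fin n → ℝ) (lam : Fin l → ℝ) (ξ : Xi l n) : ℝ :=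
  ∑ i, (ξ.2 i - ∑ j, ξ.1 i j * x j) * lam i

private lemma lf_smul {l n : ℕ} (x : Fin n → ℝ) (lam : Fin l → ℝ) (c : ℝ) (v : Xi l n) :
    lf x lam (c • v) = c * lf x lam v := by
  simp only [lf, Prod.smul_snd, Prod.smul_fst, Pi.smul_apply, smul_eq_mul, Finset.mul_sum]
  refine Finset.sum_congr rfl fun i _ => ?_
  simp only [mul_assoc]
  rw [← Finset.mul_sum]
  ring

private lemma lf_add {l n : ℕ} (x : Fin n → ℝ) (lam : Fin l → ℝ) (u v : Xi l n) :
    lf x lam (u + v) = lf x lam u + lf x lam v := by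
  simp only [lf, Prod.snd_add, Prod.fst_add, Pi.add_apply, add_mul, Finset.sum_add_distrib]
  rw [← Finset.sum_add_distrib]
  refine Finset.sum_congr rfl fun i _ => ?_
  ring

private lemma lf_zero {l n : ℕ} (x : Fin n → ℝ) (lam : Fin l → ℝ) : lf x lam 0 = 0 := by
  simp [lf]

private lemma lf_sum {l n : ℕ} {ι : Type*} (x : Fin n → ℝ) (lam : Fin l → ℝ) (s : Finset ι)
    (v : ι → Xi l n) : lf x lam (∑ i ∈ s, v i) = ∑ i ∈ s, lf x lam (v i) :=
  map_sum (⟨⟨lf x lam, lf_zero x lam⟩, lf_add x lam⟩ : Xi l n →+ ℝ) v s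

private lemma coeSum {ι : Type*} (s : Finset ι) (f : ι → ℝ) :
    ((∑ i ∈ s, f i : ℝ) : EReal) = ∑ i ∈ s, ((f i : ℝ) : EReal) :=
  map_sum (⟨⟨Real.toEReal, EReal.coe_zero⟩, EReal.coe_add⟩ : ℝ →+ EReal) f s

private lemma Qfun_eq {l n m : ℕ} (W : Fin l → Fin m → ℝ) (q : Fin m → ℝ)
    (x : Fin n → ℝ) (ξ : Xi l n) :
    Qfun W q x ξ = ⨆ lam ∈ polyD W q, ((lf x lam ξ : ℝ) : EReal) := rfl

private lemma key_lemma {Ω : Type*} [MeasurableSpace Ω] {l n m : ℕ}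
    (W : Fin l → Fin m → ℝ) (q : Fin m → ℝ)
    (ℙ : Measure Ω) [IsProbabilityMeasure ℙ]
    (ξ : Ω → Xi l n) (hξmeas : Measurable ξ) (hξint : Integrable ξ ℙ)
    (Rs : Finset (Set (Xi l n))) (hRs : IsFinPartition Rs)
    (P : Set (Xi l n)) (hP : MeasurableSet P) (x : Fin n → ℝ) :
    (if 0 < ℙ (ξ ⁻¹' P) then
        ((ℙ (ξ ⁻¹' P)).toReal : EReal) * Qfun W q x (condMean ℙ ξ P) else 0)
      ≤ ∑ R ∈ Rs, (if 0 < ℙ (ξ ⁻¹' (P ∩ R)) then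
        ((ℙ (ξ ⁻¹' (P ∩ R))).toReal : EReal) * Qfun W q x (condMean ℙ ξ (P ∩ R)) else 0) := by
  have hmeas' : ∀ R ∈ Rs, MeasurableSet (ξ ⁻¹' (P ∩ R)) :=
    fun R hR => hξmeas (hP.inter (hRs.1 R hR))
  have hdisj : Set.PairwiseDisjoint (↑Rs) (fun R => ξ ⁻¹' (P ∩ R)) := by
    intro R hR R' hR' hne
    exact Disjoint.preimage ξ ((hRs.2.1 hR hR' hne).mono Set.inter_subset_right
      Set.inter_subset_right)
  have hPsplit : ξ ⁻¹' P = ⋃ R ∈ Rs, ξ ⁻¹' (P ∩ R) := by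
    rw [← Set.preimage_iUnion₂]
    congr 1
    rw [← Set.inter_iUnion₂]
    have : ⋃ R ∈ Rs, R = ⋃₀ (Rs : Set (Set (Xi l n))) := (Set.sUnion_eq_biUnion).symm
    rw [this, hRs.2.2, Set.inter_univ]
  have hintadd : (∫ ω in ξ ⁻¹' P, ξ ω ∂ℙ) = ∑ R ∈ Rs, ∫ ω in ξ ⁻¹' (P ∩ R), ξ ω ∂ℙ := by
    rw [hPsplit]
    exact integral_biUnion_finset Rs hmeas' hdisj (fun R hR => hξint.integrableOn)
  by_cases hp : 0 < ℙ (ξ ⁻¹' P)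
  · rw [if_pos hp]
    set c : ℝ := (ℙ (ξ ⁻¹' P)).toReal with hc
    have hcpos : 0 < c := ENNReal.toReal_pos hp.ne' (measure_ne_top ℙ _)
    set RHS : EReal := ∑ R ∈ Rs, (if 0 < ℙ (ξ ⁻¹' (P ∩ R)) then
      ((ℙ (ξ ⁻¹' (P ∩ R))).toReal : EReal) * Qfun W q x (condMean ℙ ξ (P ∩ R)) else 0)
      with hRHS
    have main : ∀ lam ∈ polyD W q, ((c * lf x lam (condMean ℙ ξ P) : ℝ) : EReal) ≤ RHS := by
      intro lam hlam
      have h1 : c * lf x lam (condMean ℙ ξ P) = lf x lam (∫ ω in ξ ⁻¹' P, ξ ω ∂ℙ) := by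
        rw [condMean, lf_smul, ← mul_assoc, mul_inv_cancel₀ hcpos.ne', one_mul]
      rw [h1, hintadd, lf_sum, coeSum, hRHS]
      refine Finset.sum_le_sum fun R hR => ?_
      by_cases hpr : 0 < ℙ (ξ ⁻¹' (P ∩ R))
      · rw [if_pos hpr]
        set cR : ℝ := (ℙ (ξ ⁻¹' (P ∩ R))).toReal with hcR
        have hcRpos : 0 < cR := ENNReal.toReal_pos hpr.ne' (measure_ne_top ℙ _)
        have h2 : lf x lam (∫ ω in ξ ⁻¹' (P ∩ R), ξ ω ∂ℙ)
            = cR * lf x lam (condMean ℙ ξ (P ∩ R)) := by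
          rw [condMean, lf_smul, ← mul_assoc, mul_inv_cancel₀ hcRpos.ne', one_mul]
        rw [h2, EReal.coe_mul]
        refine mul_le_mul_of_nonneg_left ?_ (by exact_mod_cast hcRpos.le)
        rw [Qfun_eq]
        exact le_iSup₂ (f := fun lam' (_ : lam' ∈ polyD W q) =>
          ((lf x lam' (condMean ℙ ξ (P ∩ R)) : ℝ) : EReal)) lam hlam
      · rw [if_neg hpr]
        have h0 : ℙ (ξ ⁻¹' (P ∩ R)) = 0 := by
          by_contra h; exact hpr (pos_iff_ne_zero.mpr h)
        rw [setIntegral_measure_zero _ h0, lf_zero]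
        simp
    have hQle : Qfun W q x (condMean ℙ ξ P) ≤ ((c⁻¹ : ℝ) : EReal) * RHS := by
      rw [Qfun_eq]
      refine iSup₂_le fun lam hlam => ?_
      have := main lam hlam
      calc ((lf x lam (condMean ℙ ξ P) : ℝ) : EReal)
          = ((c⁻¹ : ℝ) : EReal) * ((c * lf x lam (condMean ℙ ξ P) : ℝ) : EReal) := by
            rw [← EReal.coe_mul]; congr 1; field_simp
        _ ≤ ((c⁻¹ : ℝ) : EReal) * RHS :=
            mul_le_mul_of_nonneg_left this (by exact_mod_cast (inv_nonneg.mpr hcpos.le))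
    calc ((c : ℝ) : EReal) * Qfun W q x (condMean ℙ ξ P)
        ≤ ((c : ℝ) : EReal) * (((c⁻¹ : ℝ) : EReal) * RHS) :=
          mul_le_mul_of_nonneg_left hQle (by exact_mod_cast hcpos.le)
      _ = RHS := by
          rw [← mul_assoc, ← EReal.coe_mul, mul_inv_cancel₀ hcpos.ne', EReal.coe_one, one_mul]
  · rw [if_neg hp]
    have h0 : ℙ (ξ ⁻¹' P) = 0 := by
      by_contra h; exact hp (pos_iff_ne_zero.mpr h)
    rw [Finset.sum_eq_zero]
    intro R hR
    rw [if_neg]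
    intro hpr
    have : ℙ (ξ ⁻¹' (P ∩ R)) ≤ ℙ (ξ ⁻¹' P) :=
      measure_mono (Set.preimage_mono Set.inter_subset_left)
    rw [h0] at this
    exact absurd (le_antisymm this zero_le) hpr.ne'

private lemma sum_pairs_eq_sum_image {α : Type*} (Ps Rs : Finset (Set α))
    (hPs : (Ps : Set (Set α)).PairwiseDisjoint id)
    (hRs : (Rs : Set (Set α)).PairwiseDisjoint id)
    (f : Set α → EReal) (hf : f ∅ = 0) :
    ∑ PR ∈ Ps ×ˢ Rs, f (PR.1 ∩ PR.2)
      = ∑ S ∈ (Ps ×ˢ Rs).image (fun PR => PR.1 ∩ PR.2), f S := by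
  classical
  set g : Set α × Set α → Set α := fun PR => PR.1 ∩ PR.2 with hg
  set s' : Finset (Set α × Set α) := (Ps ×ˢ Rs).filter (fun PR => (g PR).Nonempty) with hs'
  have hinj : Set.InjOn g ↑s' := by
    intro PR hPR PR' hPR' heq
    simp only [hs', Finset.coe_filter, Set.mem_setOf_eq, Finset.mem_product] at hPR hPR'
    obtain ⟨⟨hP1, hR1⟩, hne⟩ := hPR
    obtain ⟨⟨hP2, hR2⟩, _⟩ := hPR'
    obtain ⟨y, hy⟩ := hne
    have hy' : y ∈ g PR' := heq ▸ hy
    have hPeq : PR.1 = PR'.1 := by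
      by_contra hc
      exact Set.disjoint_left.mp (hPs hP1 hP2 hc) hy.1 hy'.1
    have hReq : PR.2 = PR'.2 := by
      by_contra hc
      exact Set.disjoint_left.mp (hRs hR1 hR2 hc) hy.2 hy'.2
    exact Prod.ext hPeq hReq
  have h1 : ∑ PR ∈ Ps ×ˢ Rs, f (g PR) = ∑ PR ∈ s', f (g PR) := by
    refine (Finset.sum_subset (Finset.filter_subset _ _) fun PR hPR hPR' => ?_).symm
    have : ¬ (g PR).Nonempty := by
      intro h
      exact hPR' (Finset.mem_filter.mpr ⟨hPR, h⟩)
    rw [Set.not_nonempty_iff_eq_empty.mp this, hf]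
  have h2 : ∑ PR ∈ s', f (g PR) = ∑ S ∈ s'.image g, f S :=
    (Finset.sum_image (fun a ha b hb hab => hinj ha hb hab)).symm
  have h3 : ∑ S ∈ s'.image g, f S = ∑ S ∈ (Ps ×ˢ Rs).image g, f S := by
    refine Finset.sum_subset (Finset.image_subset_image (Finset.filter_subset _ _))
      fun S hS hS' => ?_
    obtain ⟨PR, hPR, rfl⟩ := Finset.mem_image.mp hS
    by_cases hne : (g PR).Nonempty
    · exact absurd (Finset.mem_image.mpr ⟨PR, Finset.mem_filter.mpr ⟨hPR, hne⟩, rfl⟩) hS'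
    · rw [Set.not_nonempty_iff_eq_empty.mp hne, hf]
  rw [h1, h2, h3]

private lemma image_product_comm {α : Type*} (Ps Rs : Finset (Set α)) :
    (Ps ×ˢ Rs).image (fun PR => PR.1 ∩ PR.2)
      = (Rs ×ˢ Ps).image (fun PR => PR.1 ∩ PR.2) := by
  ext S
  simp only [Finset.mem_image, Finset.mem_product, Prod.exists]
  constructor
  · rintro ⟨P, R, ⟨hP, hR⟩, rfl⟩
    exact ⟨R, P, ⟨hR, hP⟩, Set.inter_comm R P⟩
  · rintro ⟨R, P, ⟨hR, hP⟩, rfl⟩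
    exact ⟨P, R, ⟨hP, hR⟩, Set.inter_comm P R⟩

/-- Lemma 2, Eq. (11): the common refinement `Ps ∧ Rs = {P ∩ R}`
satisfies `V_{Ps ∧ Rs} ≥ max(V_Ps, V_Rs)`. -/
theorem common_refinement_value_ge_max
    {Ω : Type*} [MeasurableSpace Ω] {l n m : ℕ}
    (hl : 0 < l) (hn : 0 < n) (hm : 0 < m)
    (W : Fin l → Fin m → ℝ) (q : Fin m → ℝ) (hD : (polyD W q).Nonempty)
    (ℙ : Measure Ω) [IsProbabilityMeasure ℙ]
    (ξ : Ω → Xi l n) (hξmeas : Measurable ξ) (hξint : Integrable ξ ℙ)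
    (Ps Rs : Finset (Set (Xi l n)))
    (hPs : IsFinPartition Ps) (hRs : IsFinPartition Rs) :
    ∀ x : Fin n → ℝ,
      max (Vpart W q ℙ ξ Ps x) (Vpart W q ℙ ξ Rs x) ≤
        Vpart W q ℙ ξ ((Ps ×ˢ Rs).image (fun PR => PR.1 ∩ PR.2)) x := by
  intro x
  set f : Set (Xi l n) → EReal := fun S => if 0 < ℙ (ξ ⁻¹' S) then
    ((ℙ (ξ ⁻¹' S)).toReal : EReal) * Qfun W q x (condMean ℙ ξ S) else 0 with hf
  have hfempty : f ∅ = 0 := by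
    simp only [hf, Set.preimage_empty, measure_empty, lt_self_iff_false, if_false]
  have hVdef : ∀ Qs : Finset (Set (Xi l n)), Vpart W q ℙ ξ Qs x = ∑ S ∈ Qs, f S := by
    intro Qs; rfl
  refine max_le ?_ ?_
  · rw [hVdef, hVdef]
    calc ∑ P ∈ Ps, f P
        ≤ ∑ P ∈ Ps, ∑ R ∈ Rs, f (P ∩ R) := by
          refine Finset.sum_le_sum fun P hP => ?_
          exact key_lemma W q ℙ ξ hξmeas hξint Rs hRs P (hPs.1 P hP) x
      _ = ∑ PR ∈ Ps ×ˢ Rs, f (PR.1 ∩ PR.2) := by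
          rw [Finset.sum_product]
      _ = ∑ S ∈ (Ps ×ˢ Rs).image (fun PR => PR.1 ∩ PR.2), f S :=
          sum_pairs_eq_sum_image Ps Rs hPs.2.1 hRs.2.1 f hfempty
  · rw [hVdef, hVdef]
    calc ∑ R ∈ Rs, f R
        ≤ ∑ R ∈ Rs, ∑ P ∈ Ps, f (R ∩ P) := by
          refine Finset.sum_le_sum fun R hR => ?_
          exact key_lemma W q ℙ ξ hξmeas hξint Ps hPs R (hRs.1 R hR) x
      _ = ∑ RP ∈ Rs ×ˢ Ps, f (RP.1 ∩ RP.2) := by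
          rw [Finset.sum_product]
      _ = ∑ S ∈ (Rs ×ˢ Ps).image (fun PR => PR.1 ∩ PR.2), f S :=
          sum_pairs_eq_sum_image Rs Ps hRs.2.1 hPs.2.1 f hfempty
      _ = ∑ S ∈ (Ps ×ˢ Rs).image (fun PR => PR.1 ∩ PR.2), f S := by
          rw [image_product_comm]


end
end

section
/- Let 𝒫 be a finite measurable partition of Ξ and x ∈ ℝⁿ such that ω ↦ Q(x, ξ(ω)) is integrable. Then Q(x, E[ξ]) ≤ V_𝒫(x) ≤ V(x), where V(x) := E[Q(x,ξ)]. -/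
open MeasureTheory
open scoped BigOperators Classical

noncomputable section

section AuxJensen

variable {l n m : ℕ}

/-- The continuous linear functional `ξ ↦ ⟨h - Tx, λ⟩` on `Xi l n`. -/
def lamCLM (x : Fin n → ℝ) (lam : Fin l → ℝ) : Xi l n →L[ℝ] ℝ :=
  LinearMap.toContinuousLinearMap
    { toFun := fun ξ => ∑ i, (ξ.2 i - ∑ j, ξ.1 i j * x j) * lam i
      map_add' := fun a b => by
        simp only [Prod.snd_add, Prod.fst_add, Pi.add_apply]
        rw [← Finset.sum_add_distrib]
        refine Finset.sum_congr rfl fun i _ => ?_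
        rw [show (∑ j, (a.1 i j + b.1 i j) * x j)
            = (∑ j, a.1 i j * x j) + ∑ j, b.1 i j * x j by
          rw [← Finset.sum_add_distrib]
          exact Finset.sum_congr rfl fun j _ => by ring]
        ring
      map_smul' := fun c a => by
        simp only [Prod.smul_snd, Prod.smul_fst, Pi.smul_apply, smul_eq_mul,
          RingHom.id_apply]
        rw [Finset.mul_sum]
        refine Finset.sum_congr rfl fun i _ => ?_
        rw [show (∑ j, (c * a.1 i j) * x j) = c * ∑ j, a.1 i j * x j by
          rw [Finset.mul_sum]
          exact Finset.sum_congr rfl fun j _ => by ring]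
        ring }

lemma lamCLM_apply (x : Fin n → ℝ) (lam : Fin l → ℝ) (ξ : Xi l n) :
    lamCLM x lam ξ = ∑ i, (ξ.2 i - ∑ j, ξ.1 i j * x j) * lam i := rfl

lemma lamCLM_le_Qfun (W : Fin l → Fin m → ℝ) (q : Fin m → ℝ) (x : Fin n → ℝ)
    {lam : Fin l → ℝ} (hlam : lam ∈ polyD W q) (ξ : Xi l n) :
    ((lamCLM x lam ξ : ℝ) : EReal) ≤ Qfun W q x ξ := by
  rw [lamCLM_apply]
  exact le_iSup₂ (f := fun lam (_ : lam ∈ polyD W q) =>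
    (((∑ i, (ξ.2 i - ∑ j, ξ.1 i j * x j) * lam i : ℝ)) : EReal)) lam hlam

lemma Qfun_ne_bot (W : Fin l → Fin m → ℝ) (q : Fin m → ℝ) (x : Fin n → ℝ)
    (hD : (polyD W q).Nonempty) (ξ : Xi l n) : Qfun W q x ξ ≠ ⊥ := by
  obtain ⟨lam0, hlam0⟩ := hD
  intro h
  have := lamCLM_le_Qfun W q x hlam0 ξ
  rw [h, le_bot_iff] at this
  exact EReal.coe_ne_bot _ this

lemma real_le_toReal_of_le {r : ℝ} {a : EReal} (h : (r : EReal) ≤ a) (ha : a ≠ ⊤) :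
    r ≤ a.toReal := by
  have hb : a ≠ ⊥ := by
    intro hb
    rw [hb, le_bot_iff] at h
    exact EReal.coe_ne_bot _ h
  rw [← EReal.coe_toReal ha hb] at h
  exact EReal.coe_le_coe_iff.mp h

lemma ereal_coe_finset_sum {α : Type*} (s : Finset α) (f : α → ℝ) :
    ((∑ a ∈ s, f a : ℝ) : EReal) = ∑ a ∈ s, ((f a : ℝ) : EReal) :=
  map_sum (⟨⟨Real.toEReal, EReal.coe_zero⟩, fun a b => EReal.coe_add a b⟩ : ℝ →+ EReal) f s

end AuxJensen

/-- Lemma 2, Eq. (12): `Q(x, E[ξ]) ≤ V_Ps(x) ≤ V(x)` whenever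
`ω ↦ Q(x, ξ(ω))` is integrable (a.e. finite and with integrable real part). -/
theorem jensen_sandwich_partition_value
    {Ω : Type*} [MeasurableSpace Ω] {l n m : ℕ}
    (hl : 0 < l) (hn : 0 < n) (hm : 0 < m)
    (W : Fin l → Fin m → ℝ) (q : Fin m → ℝ) (hD : (polyD W q).Nonempty)
    (ℙ : Measure Ω) [IsProbabilityMeasure ℙ]
    (ξ : Ω → Xi l n) (hξmeas : Measurable ξ) (hξint : Integrable ξ ℙ)
    (Ps : Finset (Set (Xi l n))) (hPs : IsFinPartition Ps)
    (x : Fin n → ℝ)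
    (hQint : (∀ᵐ ω ∂ℙ, Qfun W q x (ξ ω) ≠ ⊤) ∧
      Integrable (fun ω => (Qfun W q x (ξ ω)).toReal) ℙ) :
    Qfun W q x (∫ ω, ξ ω ∂ℙ) ≤ Vpart W q ℙ ξ Ps x ∧
      Vpart W q ℙ ξ Ps x ≤ Vtrue W q ℙ ξ x := by
  classical
  obtain ⟨hae, hint⟩ := hQint
  set Qr : Ω → ℝ := fun ω => (Qfun W q x (ξ ω)).toReal with hQrdef
  -- basic measurability / disjointness facts
  have hmeasA : ∀ P ∈ Ps, MeasurableSet (ξ ⁻¹' P) := fun P hP => hξmeas (hPs.1 P hP)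
  have hdisj : Set.Pairwise (↑Ps) (Function.onFun Disjoint fun P => ξ ⁻¹' P) := by
    intro P hP R hR hne
    exact Disjoint.preimage ξ (hPs.2.1 hP hR hne)
  have hUnion : ⋃ P ∈ Ps, ξ ⁻¹' P = Set.univ := by
    rw [← Set.preimage_iUnion₂]
    rw [show (⋃ P ∈ Ps, P) = ⋃₀ (↑Ps : Set (Set (Xi l n))) from (Set.sUnion_eq_biUnion).symm,
      hPs.2.2, Set.preimage_univ]
  -- splitting an integral along the partition
  have hsplit : ∀ (f : Ω → ℝ), Integrable f ℙ →
      ∫ ω, f ω ∂ℙ = ∑ P ∈ Ps, ∫ ω in ξ ⁻¹' P, f ω ∂ℙ := by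
    intro f hf
    rw [← integral_biUnion_finset Ps hmeasA hdisj (fun P _ => hf.integrableOn), hUnion,
      setIntegral_univ]
  have hint_g : ∀ lam : Fin l → ℝ, Integrable (fun ω => lamCLM x lam (ξ ω)) ℙ :=
    fun lam => (lamCLM x lam).integrable_comp hξint
  -- pointwise a.e. bound
  have hptwise : ∀ lam ∈ polyD W q, ∀ᵐ ω ∂ℙ, lamCLM x lam (ξ ω) ≤ Qr ω := by
    intro lam hlam
    exact hae.mono fun ω hω => real_le_toReal_of_le (lamCLM_le_Qfun W q x hlam (ξ ω)) hω
  -- positive toReal of positive finite measure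
  have htR : ∀ P : Set (Xi l n), 0 < ℙ (ξ ⁻¹' P) → 0 < (ℙ (ξ ⁻¹' P)).toReal :=
    fun P hpos => ENNReal.toReal_pos hpos.ne' (measure_ne_top _ _)
  -- set-integral of the linear functional in terms of condMean
  have hgP : ∀ (lam : Fin l → ℝ) (P : Set (Xi l n)), 0 < ℙ (ξ ⁻¹' P) →
      ∫ ω in ξ ⁻¹' P, lamCLM x lam (ξ ω) ∂ℙ
        = (ℙ (ξ ⁻¹' P)).toReal * lamCLM x lam (condMean ℙ ξ P) := by
    intro lam P hpos
    have hne : (ℙ (ξ ⁻¹' P)).toReal ≠ 0 := (htR P hpos).ne'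
    rw [condMean, _root_.map_smul, smul_eq_mul,
      ← (lamCLM x lam).integral_comp_comm (hξint.integrableOn)]
    field_simp
  -- per-cell Jensen inequality
  have hJensen : ∀ P : Set (Xi l n), 0 < ℙ (ξ ⁻¹' P) →
      ((ℙ (ξ ⁻¹' P)).toReal : EReal) * Qfun W q x (condMean ℙ ξ P) ≤
        ((∫ ω in ξ ⁻¹' P, Qr ω ∂ℙ : ℝ) : EReal) := by
    intro P hpos
    have hc : 0 < (ℙ (ξ ⁻¹' P)).toReal := htR P hpos
    have hQle : Qfun W q x (condMean ℙ ξ P) ≤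
        (((ℙ (ξ ⁻¹' P)).toReal⁻¹ * ∫ ω in ξ ⁻¹' P, Qr ω ∂ℙ : ℝ) : EReal) := by
      rw [Qfun]
      refine iSup₂_le fun lam hlam => ?_
      rw [show ((∑ i, ((condMean ℙ ξ P).2 i - ∑ j, (condMean ℙ ξ P).1 i j * x j) * lam i : ℝ))
          = lamCLM x lam (condMean ℙ ξ P) from rfl]
      refine EReal.coe_le_coe_iff.mpr ?_
      have h2 : lamCLM x lam (condMean ℙ ξ P)
          = (ℙ (ξ ⁻¹' P)).toReal⁻¹ * ∫ ω in ξ ⁻¹' P, lamCLM x lam (ξ ω) ∂ℙ := by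
        rw [hgP lam P hpos]
        field_simp
      rw [h2]
      have hmono : ∫ ω in ξ ⁻¹' P, lamCLM x lam (ξ ω) ∂ℙ ≤ ∫ ω in ξ ⁻¹' P, Qr ω ∂ℙ :=
        integral_mono_ae ((hint_g lam).integrableOn) hint.integrableOn
          ((hptwise lam hlam).filter_mono (ae_mono Measure.restrict_le_self))
      exact mul_le_mul_of_nonneg_left hmono (inv_nonneg.2 hc.le)
    have hnt : Qfun W q x (condMean ℙ ξ P) ≠ ⊤ :=
      ne_top_of_le_ne_top (EReal.coe_ne_top _) hQle
    have hnb : Qfun W q x (condMean ℙ ξ P) ≠ ⊥ := Qfun_ne_bot W q x hD _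
    rw [← EReal.coe_toReal hnt hnb, ← EReal.coe_mul]
    refine EReal.coe_le_coe_iff.mpr ?_
    have hr : (Qfun W q x (condMean ℙ ξ P)).toReal ≤
        (ℙ (ξ ⁻¹' P)).toReal⁻¹ * ∫ ω in ξ ⁻¹' P, Qr ω ∂ℙ := by
      rw [← EReal.coe_toReal hnt hnb] at hQle
      exact EReal.coe_le_coe_iff.mp hQle
    calc (ℙ (ξ ⁻¹' P)).toReal * (Qfun W q x (condMean ℙ ξ P)).toReal
        ≤ (ℙ (ξ ⁻¹' P)).toReal * ((ℙ (ξ ⁻¹' P)).toReal⁻¹ * ∫ ω in ξ ⁻¹' P, Qr ω ∂ℙ) :=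
          mul_le_mul_of_nonneg_left hr hc.le
      _ = ∫ ω in ξ ⁻¹' P, Qr ω ∂ℙ := by field_simp
  -- second inequality
  have hsecond : Vpart W q ℙ ξ Ps x ≤ Vtrue W q ℙ ξ x := by
    rw [Vtrue, if_pos ⟨hae, hint⟩, Vpart]
    calc (∑ P ∈ Ps, if 0 < ℙ (ξ ⁻¹' P) then
            ((ℙ (ξ ⁻¹' P)).toReal : EReal) * Qfun W q x (condMean ℙ ξ P) else 0)
        ≤ ∑ P ∈ Ps, ((∫ ω in ξ ⁻¹' P, Qr ω ∂ℙ : ℝ) : EReal) := by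
          refine Finset.sum_le_sum fun P hP => ?_
          by_cases hpos : 0 < ℙ (ξ ⁻¹' P)
          · rw [if_pos hpos]
            exact hJensen P hpos
          · rw [if_neg hpos]
            have h0 : ℙ (ξ ⁻¹' P) = 0 := by
              by_contra h
              exact hpos (pos_iff_ne_zero.mpr h)
            rw [Measure.restrict_eq_zero.mpr h0, integral_zero_measure]
            exact le_refl _
      _ = _ := by rw [← ereal_coe_finset_sum, ← hsplit Qr hint]
  refine ⟨?_, hsecond⟩
  -- first inequality
  rw [Qfun]
  refine iSup₂_le fun lam hlam => ?_
  rw [show ((∑ i, ((∫ ω, ξ ω ∂ℙ).2 i - ∑ j, (∫ ω, ξ ω ∂ℙ).1 i j * x j) * lam i : ℝ))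
      = lamCLM x lam (∫ ω, ξ ω ∂ℙ) from rfl]
  rw [← (lamCLM x lam).integral_comp_comm hξint, hsplit _ (hint_g lam),
    ereal_coe_finset_sum, Vpart]
  refine Finset.sum_le_sum fun P hP => ?_
  by_cases hpos : 0 < ℙ (ξ ⁻¹' P)
  · rw [if_pos hpos, hgP lam P hpos]
    have hc : 0 < (ℙ (ξ ⁻¹' P)).toReal := htR P hpos
    by_cases htop : Qfun W q x (condMean ℙ ξ P) = ⊤
    · rw [htop, EReal.coe_mul_top_of_pos hc]
      exact le_top
    · have hnb : Qfun W q x (condMean ℙ ξ P) ≠ ⊥ := Qfun_ne_bot W q x hD _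
      rw [← EReal.coe_toReal htop hnb, ← EReal.coe_mul]
      refine EReal.coe_le_coe_iff.mpr ?_
      refine mul_le_mul_of_nonneg_left ?_ hc.le
      exact real_le_toReal_of_le (lamCLM_le_Qfun W q x hlam _) htop
  · rw [if_neg hpos]
    have h0 : ℙ (ξ ⁻¹' P) = 0 := by
      by_contra h
      exact hpos (pos_iff_ne_zero.mpr h)
    rw [Measure.restrict_eq_zero.mpr h0, integral_zero_measure]
    exact le_refl _

end
end
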